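/- If ξ ∈ ℓ²(Γ) is positive-valued, symmetric (ξ(−γ) = ξ(γ) for all γ), and subconvolutive with constant C (i.e. (ξ*ξ)(γ) ≤ C·ξ(γ) for all γ), then λ := ξ² lies in ℓ¹(Γ) and is subconvolutive with constant C²: (λ*λ)(γ) ≤ C²·λ(γ) for all γ ∈ Γ. (Lemma 4.3.) -/
import Mathlib


open ComplexConjugate

noncomputable section

/-- Convolution of real-valued functions on a discrete abelian group. -/
def convR {Γ : Type*} [AddCommGroup Γ] (a b : Γ → ℝ) (γ : Γ) : ℝ :=
  ∑' γ', a (γ - γ') * b γ'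

/-- Lemma 4.3: if `ξ ∈ ℓ²(Γ)` is positive-valued, symmetric and
subconvolutive with constant `C`, then `λ := ξ²` lies in `ℓ¹(Γ)` and is subconvolutive with
constant `C²`. -/
theorem hh_sq_subconvolutive {Γ : Type*} [AddCommGroup Γ]
    (xi : Γ → ℝ) (hxi_pos : ∀ γ, 0 < xi γ) (hxi_symm : ∀ γ, xi (-γ) = xi γ)
    (hxi_l2 : Summable fun γ => xi γ ^ 2)
    (C : ℝ) (hxi_subconv : ∀ γ, convR xi xi γ ≤ C * xi γ) :
    Summable (fun γ => xi γ ^ 2) ∧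
      ∀ γ : Γ, convR (fun γ' => xi γ' ^ 2) (fun γ' => xi γ' ^ 2) γ ≤ C ^ 2 * xi γ ^ 2 := by
  refine ⟨hxi_l2, fun γ => ?_⟩
  set f : Γ → ℝ := fun γ' => xi (γ - γ') * xi γ' with hf_def
  have hshift : Summable fun γ' => xi (γ - γ') ^ 2 :=
    ((Equiv.subLeft γ).summable_iff (f := fun x => xi x ^ 2)).2 hxi_l2
  have hfnn : ∀ γ', 0 ≤ f γ' := fun γ' =>
    mul_nonneg (hxi_pos _).le (hxi_pos _).le
  have hf : Summable f := by
    refine Summable.of_nonneg_of_le hfnn (fun γ' => ?_)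
      ((hshift.add hxi_l2).div_const 2)
    have := two_mul_le_add_sq (xi (γ - γ')) (xi γ')
    simp only [hf_def]
    linarith
  set S : ℝ := ∑' γ', f γ' with hS_def
  have hS_nonneg : 0 ≤ S := tsum_nonneg hfnn
  have hle : ∀ γ', f γ' ≤ S := fun γ' => Summable.le_tsum hf γ' fun _ _ => hfnn _
  have ht : ∀ γ', xi (γ - γ') ^ 2 * xi γ' ^ 2 = f γ' ^ 2 := fun γ' => by
    simp [hf_def, mul_pow]
  have htsum : Summable fun γ' => xi (γ - γ') ^ 2 * xi γ' ^ 2 := by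
    refine Summable.of_nonneg_of_le (fun γ' => by positivity)
      (fun γ' => ?_) (hf.mul_left S)
    rw [ht γ', sq]
    exact mul_le_mul_of_nonneg_right (hle γ') (hfnn γ')
  have hSle : S ≤ C * xi γ := hxi_subconv γ
  calc convR (fun γ' => xi γ' ^ 2) (fun γ' => xi γ' ^ 2) γ
      ≤ ∑' γ', S * f γ' := by
        refine Summable.tsum_le_tsum (fun γ' => ?_) htsum (hf.mul_left S)
        rw [ht γ', sq]
        exact mul_le_mul_of_nonneg_right (hle γ') (hfnn γ')
    _ = S * S := by rw [tsum_mul_left]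
    _ ≤ (C * xi γ) * (C * xi γ) :=
        mul_le_mul hSle hSle hS_nonneg (le_trans hS_nonneg hSle)
    _ = C ^ 2 * xi γ ^ 2 := by ring
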